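/- Let f : [0, π] → [0, π] be defined by f(θ) = arccos((sin θ + (π − θ)·cos θ)/π). Then as θ → 0⁺, ln sin²(f(θ)) = ln sin²(θ) − (2/(3π))·θ − (2/(9π²))·θ² + O(θ³); that is, there exist constants C > 0 and θ₀ ∈ (0, π) such that |ln sin²(f(θ)) − ln sin²(θ) + (2/(3π))θ + (2/(9π²))θ²| ≤ C·θ³ for all θ ∈ (0, θ₀]. -/

import Mathlib

open Real

/-- Helper: if `f 0 = 0` and `f' ≥ 0` on `[0, ∞)`, then `f ≥ 0` on `[0, ∞)`. -/
lemma aux_nonneg_of_deriv (f f' : ℝ → ℝ) (hf : ∀ x, HasDerivAt f (f' x) x)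
    (h0 : f 0 = 0) (hf' : ∀ x, 0 ≤ x → 0 ≤ f' x) : ∀ x, 0 ≤ x → 0 ≤ f x := by
  intro x hx
  have hmono : MonotoneOn f (Set.Ici (0:ℝ)) := by
    apply monotoneOn_of_deriv_nonneg (convex_Ici 0)
    · exact fun y _ => (hf y).continuousAt.continuousWithinAt
    · exact fun y _ => (hf y).differentiableAt.differentiableWithinAt
    · intro y hy
      rw [(hf y).deriv]
      exact hf' y (le_of_lt (by simpa [interior_Ici] using hy))
  have := hmono (Set.self_mem_Ici) (Set.mem_Ici.2 hx) hx
  linarith [h0 ▸ this]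

lemma aux_sin_ge_1 (x : ℝ) (hx : 0 ≤ x) : x - x^3/6 ≤ Real.sin x := by
  have h := aux_nonneg_of_deriv (fun x => Real.sin x - (x - x^3/6))
      (fun x => Real.cos x - (1 - x^2/2))
      (fun x => ((Real.hasDerivAt_sin x).sub ((hasDerivAt_id x).sub
        ((hasDerivAt_pow 3 x).div_const 6))).congr_deriv (by push_cast; ring))
      (by norm_num)
      (fun x _ => by linarith [Real.one_sub_sq_div_two_le_cos (x := x)])
  linarith [h x hx]

lemma aux_cos_le_2 (x : ℝ) (hx : 0 ≤ x) : Real.cos x ≤ 1 - x^2/2 + x^4/24 := by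
  have h := aux_nonneg_of_deriv (fun x => (1 - x^2/2 + x^4/24) - Real.cos x)
      (fun x => Real.sin x - (x - x^3/6))
      (fun x => ((((hasDerivAt_const x (1:ℝ)).sub ((hasDerivAt_pow 2 x).div_const 2)).add
        ((hasDerivAt_pow 4 x).div_const 24)).sub (Real.hasDerivAt_cos x)).congr_deriv (by
          push_cast; ring))
      (by norm_num)
      (fun x hx => by linarith [aux_sin_ge_1 x hx])
  linarith [h x hx]

lemma aux_sin_le_2 (x : ℝ) (hx : 0 ≤ x) : Real.sin x ≤ x - x^3/6 + x^5/120 := by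
  have h := aux_nonneg_of_deriv (fun x => (x - x^3/6 + x^5/120) - Real.sin x)
      (fun x => (1 - x^2/2 + x^4/24) - Real.cos x)
      (fun x => ((((hasDerivAt_id x).sub ((hasDerivAt_pow 3 x).div_const 6)).add
        ((hasDerivAt_pow 5 x).div_const 120)).sub (Real.hasDerivAt_sin x)).congr_deriv (by
          push_cast; ring))
      (by norm_num)
      (fun x hx => by linarith [aux_cos_le_2 x hx])
  linarith [h x hx]

lemma aux_cos_ge_3 (x : ℝ) (hx : 0 ≤ x) : 1 - x^2/2 + x^4/24 - x^6/720 ≤ Real.cos x := by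
  have h := aux_nonneg_of_deriv (fun x => Real.cos x - (1 - x^2/2 + x^4/24 - x^6/720))
      (fun x => (x - x^3/6 + x^5/120) - Real.sin x)
      (fun x => ((Real.hasDerivAt_cos x).sub ((((hasDerivAt_const x (1:ℝ)).sub
        ((hasDerivAt_pow 2 x).div_const 2)).add ((hasDerivAt_pow 4 x).div_const 24)).sub
        ((hasDerivAt_pow 6 x).div_const 720))).congr_deriv (by push_cast; ring))
      (by norm_num)
      (fun x hx => by linarith [aux_sin_le_2 x hx])
  linarith [h x hx]

lemma aux_sin_ge_3 (x : ℝ) (hx : 0 ≤ x) :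
    x - x^3/6 + x^5/120 - x^7/5040 ≤ Real.sin x := by
  have h := aux_nonneg_of_deriv
      (fun x => Real.sin x - (x - x^3/6 + x^5/120 - x^7/5040))
      (fun x => Real.cos x - (1 - x^2/2 + x^4/24 - x^6/720))
      (fun x => ((Real.hasDerivAt_sin x).sub ((((hasDerivAt_id x).sub
        ((hasDerivAt_pow 3 x).div_const 6)).add ((hasDerivAt_pow 5 x).div_const 120)).sub
        ((hasDerivAt_pow 7 x).div_const 5040))).congr_deriv (by push_cast; ring))
      (by norm_num)
      (fun x hx => by linarith [aux_cos_ge_3 x hx])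
  linarith [h x hx]

/-- The infinite width angle update map `f(θ) = arccos((sin θ + (π − θ)·cos θ)/π)`,
mapping `[0, π]` to `[0, π]`. -/
noncomputable def infWidthMap (θ : ℝ) : ℝ :=
  Real.arccos ((Real.sin θ + (π - θ) * Real.cos θ) / π)

set_option maxHeartbeats 1000000 in
/-- As `θ → 0⁺`, the infinite width angle update map satisfies
`ln sin²(f(θ)) = ln sin²(θ) − (2/(3π))·θ − (2/(9π²))·θ² + O(θ³)`: there exist constants
`C > 0` and `θ₀ ∈ (0, π)` such that
`|ln sin²(f(θ)) − ln sin²(θ) + (2/(3π))θ + (2/(9π²))θ²| ≤ C·θ³` for all `θ ∈ (0, θ₀]`. -/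
theorem infWidthMap_log_sin_sq_expansion :
    ∃ C > (0 : ℝ), ∃ θ₀ ∈ Set.Ioo (0 : ℝ) π, ∀ θ ∈ Set.Ioc (0 : ℝ) θ₀,
      |Real.log (Real.sin (infWidthMap θ) ^ 2) - Real.log (Real.sin θ ^ 2) +
          (2 / (3 * π)) * θ + (2 / (9 * π ^ 2)) * θ ^ 2| ≤ C * θ ^ 3 := by
  have hπ3 : (3:ℝ) < π := Real.pi_gt_three
  have hπ0 : (0:ℝ) < π := by linarith only [hπ3]
  refine ⟨10, by norm_num, 1/2, ⟨by norm_num, by linarith only [hπ3]⟩, ?_⟩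
  rintro θ ⟨hθ0, hθh⟩
  set s := Real.sin θ with hs_def
  set co := Real.cos θ with hco_def
  set u := s - θ * co with hu_def
  have hθ1 : θ ≤ 1/2 := hθh
  have hθnn : (0:ℝ) ≤ θ := le_of_lt hθ0
  have hθsq : θ^2 ≤ 1/4 := by nlinarith only [hθ1, hθ0]
  have hs1 : θ - θ^3/6 ≤ s := aux_sin_ge_1 θ hθnn
  have hs2 : s ≤ θ - θ^3/6 + θ^5/120 := aux_sin_le_2 θ hθnn
  have hs3 : θ - θ^3/6 + θ^5/120 - θ^7/5040 ≤ s := aux_sin_ge_3 θ hθnn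
  have hc1 : 1 - θ^2/2 ≤ co := Real.one_sub_sq_div_two_le_cos
  have hc2 : co ≤ 1 - θ^2/2 + θ^4/24 := aux_cos_le_2 θ hθnn
  have hc3 : 1 - θ^2/2 + θ^4/24 - θ^6/720 ≤ co := aux_cos_ge_3 θ hθnn
  -- monomial facts
  have hp3n : (0:ℝ) ≤ θ^3 := pow_nonneg hθnn 3
  have hp5n : (0:ℝ) ≤ θ^5 := pow_nonneg hθnn 5
  have hp6n : (0:ℝ) ≤ θ^6 := pow_nonneg hθnn 6
  have hp7n : (0:ℝ) ≤ θ^7 := pow_nonneg hθnn 7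
  have hp8 : (0:ℝ) ≤ θ^8 := pow_nonneg hθnn 8
  have hp9 : (0:ℝ) ≤ θ^9 := pow_nonneg hθnn 9
  have hp3 : θ^3 ≤ θ/4 := by nlinarith only [hθsq, hθnn]
  have hp4 : θ^4 ≤ θ^2/4 := by nlinarith only [hθsq, sq_nonneg θ]
  have hp5 : θ^5 ≤ θ^3/4 := by nlinarith only [hθsq, hp3n]
  have hp6 : θ^6 ≤ θ^5/2 := by nlinarith only [hθ1, hp5n]
  have hp7 : θ^7 ≤ θ^5/4 := by nlinarith only [hθsq, hp5n]
  have hp11 : θ^11 ≤ θ^7 := pow_le_pow_of_le_one hθnn (by linarith only [hθ1]) (by norm_num)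
  have hp10 : θ^10 ≤ θ^6 := pow_le_pow_of_le_one hθnn (by linarith only [hθ1]) (by norm_num)
  have hspos : 0 < s := by linarith only [hs1, hp3, hθ0]
  have hco_pos : (0:ℝ) < co := by linarith only [hc1, hθsq]
  have hculow : θ * (1 - θ^2/2 + θ^4/24 - θ^6/720) ≤ θ * co :=
    mul_le_mul_of_nonneg_left hc3 hθnn
  have hcuup : θ * co ≤ θ * (1 - θ^2/2 + θ^4/24) := mul_le_mul_of_nonneg_left hc2 hθnn
  have hu1 : u ≤ θ^3/3 - θ^5/30 + θ^7/720 := by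
    rw [hu_def]; linarith only [hculow, hs2]
  have hu2 : θ^3/3 - θ^5/30 - θ^7/5040 ≤ u := by
    rw [hu_def]; linarith only [hcuup, hs3]
  have hpos57 : (0:ℝ) ≤ θ^3/3 - θ^5/30 - θ^7/5040 := by
    linarith only [hp5, hp7, hp3n, hp5n, hp7n]
  have hu0 : 0 ≤ u := le_trans hpos57 hu2
  have hu3 : u ≤ θ^3/3 := by linarith only [hu1, hp7, hp5n]
  -- squares of sin bounds
  have hs1nn : 0 ≤ θ - θ^3/6 := by linarith only [hp3, hθnn]
  have hsq1 : θ^2 - θ^4/3 ≤ s^2 := by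
    have h := mul_le_mul hs1 hs1 hs1nn hspos.le
    linarith only [h, hp6n]
  have hsq2 : s^2 ≤ θ^2 - θ^4/3 + θ^6 := by
    have h := mul_le_mul hs2 hs2 hspos.le
      (by linarith only [hs1nn, hp5n] : (0:ℝ) ≤ θ - θ^3/6 + θ^5/120)
    linarith only [h, hp10, hp8, hp6n]
  have hsq3 : θ^2/2 ≤ s^2 := by linarith only [hsq1, hp4, sq_nonneg θ]
  -- bounds on 2 * co * u
  have hA2low : (2:ℝ)/3*θ^3 - 2/5*θ^5 - θ^7 ≤ 2*co*u := by
    have h := mul_le_mul hc1 hu2 hpos57 hco_pos.le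
    linarith only [h, hp7n, hp9]
  have hA2up : 2*co*u ≤ (2:ℝ)/3*θ^3 - 2/5*θ^5 + θ^7 := by
    have h := mul_le_mul hc2 hu1 hu0
      (by linarith only [hθsq, pow_nonneg hθnn 4] : (0:ℝ) ≤ 1 - θ^2/2 + θ^4/24)
    linarith only [h, hp9, hp11, hp7n]
  -- u^2 bound
  have husq : u^2 ≤ θ^6/9 := by
    have h := mul_le_mul hu3 hu3 hu0 (by positivity : (0:ℝ) ≤ θ^3/3)
    linarith only [h]
  have huπ1 : 0 ≤ u^2/π := by positivity
  have huπ2 : u^2/π ≤ θ^6/27 := by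
    rw [div_le_iff₀ hπ0]
    nlinarith only [husq, hp6n, hπ3]
  -- the key numerator bound
  have hθs1 : (2:ℝ)/3*θ*s^2 ≤ 2/3*θ*(θ^2 - θ^4/3 + θ^6) :=
    mul_le_mul_of_nonneg_left hsq2 (by positivity)
  have hθs2 : (2:ℝ)/3*θ*(θ^2 - θ^4/3) ≤ 2/3*θ*s^2 :=
    mul_le_mul_of_nonneg_left hsq1 (by positivity)
  have hMup : (2:ℝ)/3*θ*s^2 - 2*co*u - u^2/π ≤ θ^5 := by
    linarith only [hθs1, hA2low, huπ1, hp7, hp5n]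
  have hMlow : -θ^5 ≤ (2:ℝ)/3*θ*s^2 - 2*co*u - u^2/π := by
    linarith only [hθs2, hA2up, huπ2, hp7, hp6, hp5n, hp6n, hp7n]
  -- define x
  set x := (-(2*co*u)/π - u^2/π^2)/s^2 with hx_def
  have hs2ne : s^2 ≠ 0 := by positivity
  -- |x + aθ| ≤ θ^3
  have hxa : |x + 2/(3*π)*θ| ≤ θ^3 := by
    have hexp : x + 2/(3*π)*θ = ((2:ℝ)/3*θ*s^2 - 2*co*u - u^2/π)/(π*s^2) := by
      rw [hx_def]; field_simp; ring
    rw [hexp, abs_div, abs_of_pos (by positivity : (0:ℝ) < π*s^2), div_le_iff₀ (by positivity)]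
    have habs : |(2:ℝ)/3*θ*s^2 - 2*co*u - u^2/π| ≤ θ^5 := abs_le.2 ⟨hMlow, hMup⟩
    have h3 := mul_le_mul_of_nonneg_left hsq3 (by positivity : (0:ℝ) ≤ θ^3*π)
    nlinarith only [h3, hp5n, hπ3, habs]
  have haθ : 2/(3*π)*θ ≤ θ/4 := by
    have h1 : 2/(3*π) ≤ 1/4 := by
      rw [div_le_div_iff₀ (by linarith only [hπ3]) (by norm_num)]
      linarith only [hπ3]
    have h2 := mul_le_mul_of_nonneg_right h1 hθnn
    linarith only [h2]
  have haθ0 : 0 ≤ 2/(3*π)*θ := by positivity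
  have hxabs : |x| ≤ θ/2 := by
    have h := abs_le.1 hxa
    rw [abs_le]
    constructor
    · linarith only [h.1, hp3, haθ]
    · linarith only [h.2, hp3, haθ0, hθnn]
  have hxq : |x| ≤ 1/4 := by linarith only [hxabs, hθ1]
  have h1x : (1:ℝ)/2 ≤ 1 + x := by
    have h := (abs_le.1 hxabs).1
    linarith only [h, hθ1]
  -- the identity 1 - c² = s²(1 + x)
  set c := (s + (π - θ) * co) / π with hc_def
  have hpyth : s^2 + co^2 = 1 := Real.sin_sq_add_cos_sq θ
  have hident : 1 - c^2 = s^2 * (1 + x) := by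
    rw [hc_def, hx_def, hu_def]
    field_simp
    linear_combination (-π^2) * hpyth
  have h1cpos : 0 < 1 - c^2 := by
    rw [hident]
    have hs2pos : (0:ℝ) < s^2 := by positivity
    exact mul_pos hs2pos (by linarith only [h1x])
  have harg : infWidthMap θ = Real.arccos c := by rw [infWidthMap, hc_def]
  have hsinf : Real.sin (infWidthMap θ)^2 = 1 - c^2 := by
    rw [harg, Real.sin_arccos, sq_sqrt h1cpos.le]
  have hlog_eq : Real.log (Real.sin (infWidthMap θ)^2) = Real.log (s^2) + Real.log (1+x) := by
    rw [hsinf, hident, Real.log_mul hs2ne (by linarith only [h1x])]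
  -- log estimate
  have hxlt : |(-x)| < 1 := by rw [abs_neg]; linarith only [hxq]
  have hlog3 := Real.abs_log_sub_add_sum_range_le hxlt 2
  simp [Finset.sum_range_succ] at hlog3
  have hlogb : |Real.log (1+x) - x + x^2/2| ≤ θ^3 := by
    have heq : Real.log (1+x) - x + x^2/2 = -x + x^2/(1+1) + Real.log (1+x) := by ring
    rw [heq]
    have h1 : |x|^3 ≤ θ^3/8 := by
      have h := pow_le_pow_left₀ (abs_nonneg x) hxabs 3
      nlinarith only [h]
    have h2 : (3:ℝ)/4 ≤ 1 - |x| := by linarith only [hxq]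
    have h3 : |x|^3/(1-|x|) ≤ (θ^3/8)/(3/4) :=
      div_le_div₀ (by linarith only [hp3n]) h1 (by norm_num) h2
    linarith only [hlog3, h3, hp3n]
  have hsqb : |2/(9*π^2)*θ^2 - x^2/2| ≤ θ^3 := by
    have key : 2/(9*π^2)*θ^2 - x^2/2 = (x + 2/(3*π)*θ) * (2/(3*π)*θ - x) / 2 := by
      field_simp
      ring
    rw [key]
    have h2 : |2/(3*π)*θ - x| ≤ θ := by
      rw [abs_le]
      have h := abs_le.1 hxabs
      constructor
      · linarith only [h.2, haθ, haθ0, hθnn]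
      · linarith only [h.1, haθ, hθnn]
    rw [abs_div, abs_mul]
    have hm := mul_le_mul hxa h2 (abs_nonneg _) hp3n
    have habs2 : |(2:ℝ)| = 2 := by norm_num
    rw [habs2]
    have hp43 : θ^4 ≤ θ^3 := by nlinarith only [hp3n, hθ1]
    linarith only [hm, hp43, hp3n]
  -- final assembly
  have hfinal : Real.log (Real.sin (infWidthMap θ)^2) - Real.log (s^2) +
      2/(3*π)*θ + 2/(9*π^2)*θ^2
      = (Real.log (1+x) - x + x^2/2) + (x + 2/(3*π)*θ) + (2/(9*π^2)*θ^2 - x^2/2) := by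
    rw [hlog_eq]; ring
  calc |Real.log (Real.sin (infWidthMap θ)^2) - Real.log (s^2) +
      2/(3*π)*θ + 2/(9*π^2)*θ^2|
      = |(Real.log (1+x) - x + x^2/2) + (x + 2/(3*π)*θ) + (2/(9*π^2)*θ^2 - x^2/2)| := by
        rw [hfinal]
    _ ≤ |Real.log (1+x) - x + x^2/2| + |x + 2/(3*π)*θ| + |2/(9*π^2)*θ^2 - x^2/2| :=
        abs_add_three _ _ _
    _ ≤ θ^3 + θ^3 + θ^3 := by linarith only [hlogb, hxa, hsqb]
    _ ≤ 10 * θ^3 := by linarith only [hp3n]
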